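/- (Ensemble quantum Fisher information identity used in the proof of Theorem 4.) Let K be a positive integer, q_1,…,q_K > 0 with Σ_k q_k = 1, η_1,…,η_K ∈ ℂ^d unit vectors, H_S an Hermitian d×d matrix, and ε_1,…,ε_K ∈ ℝ. Let H_A = diag(ε_1,…,ε_K) acting on ℂ^K with standard basis {e_k}, and let σ = Σ_k q_k |η_k⟩⟨η_k| ⊗ |e_k⟩⟨e_k| be the corresponding density matrix on ℂ^d ⊗ ℂ^K. Then F_{H_S ⊗ I_K + I_d ⊗ H_A}(σ) = Σ_k q_k F_{H_S}(|η_k⟩⟨η_k|) = 4·Σ_k q_k V_{H_S}(η_k). -/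

import Mathlib

open Matrix Complex Filter Kronecker
open scoped ComplexOrder

noncomputable section

/-- n-fold Kronecker power of a matrix, indexed by functions `Fin n → Fin d`. -/
def kronPow {d : ℕ} (X : Matrix (Fin d) (Fin d) ℂ) (n : ℕ) :
    Matrix (Fin n → Fin d) (Fin n → Fin d) ℂ :=
  Matrix.of fun i j => ∏ k, X (i k) (j k)

/-- The `n`-copy (non-interacting) Hamiltonian `Σᵢ I^{⊗(i-1)} ⊗ H ⊗ I^{⊗(n-i)}`. -/
def nCopyHam {d : ℕ} (H : Matrix (Fin d) (Fin d) ℂ) (n : ℕ) :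
    Matrix (Fin n → Fin d) (Fin n → Fin d) ℂ :=
  ∑ k : Fin n, Matrix.of fun i j =>
    H (i k) (j k) * ∏ l ∈ Finset.univ.erase k, (if i l = j l then (1 : ℂ) else 0)

/-- Time evolution unitary `e^{-iHt}`. -/
def timeEvol {m : Type*} [Fintype m] [DecidableEq m] (H : Matrix m m ℂ) (t : ℝ) :
    Matrix m m ℂ :=
  NormedSpace.exp ((-(Complex.I * (t : ℂ))) • H)

/-- The positive semidefinite square root, as `Matrix.PosSemidef.sqrt` was defined in Mathlib
of December 2024 (removed since). -/
def Matrix.PosSemidef.sqrt {𝕜 : Type*} [RCLike 𝕜] {n : Type*} [Fintype n] [DecidableEq n]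
    {A : Matrix n n 𝕜} (hA : A.PosSemidef) : Matrix n n 𝕜 :=
  hA.1.eigenvectorUnitary.1 * diagonal ((↑) ∘ (√·) ∘ hA.1.eigenvalues) *
    (star hA.1.eigenvectorUnitary : Matrix n n 𝕜)

/-- Trace norm `‖A‖₁ = Tr √(AᴴA)`. -/
def traceNorm {m : Type*} [Fintype m] [DecidableEq m] (A : Matrix m m ℂ) : ℝ :=
  ((Matrix.posSemidef_conjTranspose_mul_self A).sqrt.trace).re

/-- A quantum channel: a map admitting a Kraus representation. -/
def IsQuantumChannel {m n : Type*} [Fintype m] [DecidableEq m] [Fintype n] [DecidableEq n]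
    (E : Matrix m m ℂ → Matrix n n ℂ) : Prop :=
  ∃ (K : ℕ) (A : Fin K → Matrix n m ℂ),
    (∀ X, E X = ∑ k, A k * X * (A k)ᴴ) ∧ (∑ k, (A k)ᴴ * A k = 1)

/-- Time-translation invariance of a map w.r.t. input/output Hamiltonians. -/
def IsTI {m n : Type*} [Fintype m] [DecidableEq m] [Fintype n] [DecidableEq n]
    (Hin : Matrix m m ℂ) (Hout : Matrix n n ℂ)
    (E : Matrix m m ℂ → Matrix n n ℂ) : Prop :=
  ∀ (t : ℝ) (X : Matrix m m ℂ),
    timeEvol Hout t * E X * timeEvol Hout (-t) =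
      E (timeEvol Hin t * X * timeEvol Hin (-t))

/-- Energy variance of a (unit) vector. -/
def varVec {m : Type*} [Fintype m] (H : Matrix m m ℂ) (ψ : m → ℂ) : ℝ :=
  (star ψ ⬝ᵥ ((H * H) *ᵥ ψ)).re - ((star ψ ⬝ᵥ (H *ᵥ ψ)).re) ^ 2

/-- The quantum Fisher information formula for a given spectral decomposition data. -/
def qfiOf {m : Type*} [Fintype m] (H : Matrix m m ℂ) (p : m → ℝ) (φ : m → m → ℂ) : ℝ :=
  2 * ∑ j, ∑ k,
    if 0 < p j + p k then
      (p j - p k) ^ 2 / (p j + p k) * Complex.normSq (star (φ j) ⬝ᵥ (H *ᵥ φ k))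
    else 0

/-- Quantum Fisher information of a Hermitian (e.g. density) matrix `ρ` w.r.t. `H`. -/
def QFI {m : Type*} [Fintype m] [DecidableEq m] {ρ : Matrix m m ℂ}
    (hρ : ρ.IsHermitian) (H : Matrix m m ℂ) : ℝ :=
  qfiOf H hρ.eigenvalues (fun j i => hρ.eigenvectorBasis j i)

open scoped Classical in
/-- Total positive-semidefinite square root (zero on non-PSD inputs). -/
def msqrt {m : Type*} [Fintype m] [DecidableEq m] (A : Matrix m m ℂ) : Matrix m m ℂ :=
  if h : A.PosSemidef then h.sqrt else 0

/-- Fidelity `Fid(ρ,σ) = (Tr √(√ρ σ √ρ))² = ‖√σ √ρ‖₁²`. -/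
def fid {m : Type*} [Fintype m] [DecidableEq m] (ρ σ : Matrix m m ℂ) : ℝ :=
  (traceNorm (msqrt σ * msqrt ρ)) ^ 2

/-- Density matrix. -/
def IsDensityMatrix {m : Type*} [Fintype m] (ρ : Matrix m m ℂ) : Prop :=
  ρ.PosSemidef ∧ ρ.trace = 1


section AuxLemmas
variable {d K : ℕ} {m : Type*} [Fintype m] [DecidableEq m]

def ff (x y : ℝ) : ℝ := if 0 < x + y then (x - y) ^ 2 / (x + y) else 0

lemma ff_self (x : ℝ) : ff x x = 0 := by
  unfold ff; by_cases h : 0 < x + x <;> simp [h]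

lemma ff_pos_zero {c : ℝ} (hc : 0 < c) : ff c 0 = c := by
  unfold ff; rw [if_pos (by linarith)]; field_simp; ring

lemma ff_zero_pos {c : ℝ} (hc : 0 < c) : ff 0 c = c := by
  unfold ff; rw [if_pos (by linarith)]; rw [zero_add, zero_sub, neg_sq]; field_simp


lemma exists_onb {d : ℕ} (η : Fin d → ℂ) (hη : star η ⬝ᵥ η = 1) :
    ∃ (i₀ : Fin d) (u : Fin d → Fin d → ℂ),
      (∀ i j, star (u i) ⬝ᵥ u j = if i = j then 1 else 0) ∧ u i₀ = η := by
  have hd : 0 < d := by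
    rcases Nat.eq_zero_or_pos d with h | h
    · subst h; simp [dotProduct] at hη
    · exact h
  let i₀ : Fin d := ⟨0, hd⟩
  let ηE : EuclideanSpace ℂ (Fin d) := WithLp.toLp 2 η
  have hnorm : (inner ℂ ηE ηE : ℂ) = 1 := by
    simp only [ηE, PiLp.inner_apply, RCLike.inner_apply]
    simpa [dotProduct, Pi.star_apply, RCLike.star_def, mul_comm] using hη
  have horthS : Orthonormal ℂ (({i₀} : Set (Fin d)).restrict (fun _ : Fin d => ηE)) := by
    rw [orthonormal_iff_ite]
    rintro ⟨i, hi⟩ ⟨j, hj⟩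
    simp only [Set.mem_singleton_iff] at hi hj
    subst hi; subst hj
    simp [Set.restrict, hnorm]
    left
    rw [inner_self_eq_norm_sq_to_K] at hnorm
    have h2 : ‖ηE‖ ^ 2 = 1 :=
      RCLike.ofReal_injective (K := ℂ) (by rw [RCLike.ofReal_pow, RCLike.ofReal_one]; exact hnorm)
    exact (pow_eq_one_iff_of_nonneg (norm_nonneg _) two_ne_zero).mp h2
  obtain ⟨b, hb⟩ := horthS.exists_orthonormalBasis_extension_of_card_eq
    (by simp)
  refine ⟨i₀, fun i x => b i x, fun i j => ?_, ?_⟩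
  · have h := (orthonormal_iff_ite.mp b.orthonormal) i j
    simpa [PiLp.inner_apply, dotProduct, RCLike.inner_apply, Pi.star_apply, RCLike.star_def,
      mul_comm] using h
  · have := hb i₀ rfl
    funext x
    show b i₀ x = η x
    rw [this]


lemma qfiOf_eq_ff (H : Matrix m m ℂ) (p : m → ℝ) (φ : m → m → ℂ) :
    qfiOf H p φ = 2 * ∑ j, ∑ k, ff (p j) (p k) * Complex.normSq (star (φ j) ⬝ᵥ (H *ᵥ φ k)) := by
  unfold qfiOf ff
  congr 1
  refine Finset.sum_congr rfl fun j _ => Finset.sum_congr rfl fun k _ => ?_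
  by_cases h : 0 < p j + p k <;> simp [h]


lemma colMatrix_entry (H : Matrix m m ℂ) (φ : m → m → ℂ) (j k : m) :
    ((Matrix.of fun i j => φ j i)ᴴ * H * (Matrix.of fun i j => φ j i)) j k
      = star (φ j) ⬝ᵥ (H *ᵥ φ k) := by
  simp only [Matrix.mul_apply, Matrix.conjTranspose_apply, Matrix.of_apply, dotProduct,
    Matrix.mulVec, Pi.star_apply, RCLike.star_def]
  simp only [Finset.sum_mul]
  rw [Finset.sum_comm]
  refine Finset.sum_congr rfl fun i _ => ?_
  rw [Finset.mul_sum]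
  exact Finset.sum_congr rfl fun c _ => by ring


lemma colMatrix_mul_entry (φ ψ : m → m → ℂ) (j a : m) :
    ((Matrix.of fun i j => φ j i)ᴴ * (Matrix.of fun i a => ψ a i)) j a
      = star (φ j) ⬝ᵥ ψ a := by
  simp [Matrix.mul_apply, Matrix.conjTranspose_apply, dotProduct]


lemma sum_invariance (M : Matrix m m ℂ) (U : Matrix m m ℂ)
    (hUU : U * Uᴴ = 1) (p p' : m → ℝ)
    (hUp : ∀ j a, p j ≠ p' a → U j a = 0) :
    ∑ ab : m × m, (ff (p' ab.1) (p' ab.2) : ℂ) *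
        ((Uᴴ * M * U) ab.1 ab.2 * (starRingEnd ℂ) ((Uᴴ * M * U) ab.1 ab.2))
      = ∑ x : m × m, (ff (p x.1) (p x.2) : ℂ) * (M x.1 x.2 * (starRingEnd ℂ) (M x.1 x.2)) := by
  classical
  have hrow : ∀ j j', ∑ a, U j a * (starRingEnd ℂ) (U j' a) = if j = j' then 1 else 0 := by
    intro j j'
    have := congrFun (congrFun hUU j) j'
    simpa [Matrix.mul_apply, Matrix.conjTranspose_apply, Matrix.one_apply] using this
  have hrow' : ∀ j j', ∑ a, (starRingEnd ℂ) (U j a) * U j' a = if j' = j then 1 else 0 := by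
    intro j j'
    rw [show (∑ a, (starRingEnd ℂ) (U j a) * U j' a) = ∑ a, U j' a * (starRingEnd ℂ) (U j a)
      from Finset.sum_congr rfl fun a _ => mul_comm _ _, hrow j' j]
  have hrepl : ∀ (j k a b : m) (Z : ℂ),
      ((ff (p' a) (p' b) : ℝ) : ℂ) * ((starRingEnd ℂ) (U j a) * (U k b * Z))
        = ((ff (p j) (p k) : ℝ) : ℂ) * ((starRingEnd ℂ) (U j a) * (U k b * Z)) := by
    intro j k a b Z
    by_cases h1 : U j a = 0
    · simp [h1]
    by_cases h2 : U k b = 0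
    · simp [h2]
    have e1 : p j = p' a := by by_contra h; exact h1 (hUp _ _ h)
    have e2 : p k = p' b := by by_contra h; exact h2 (hUp _ _ h)
    rw [e1, e2]
  have hN : ∀ a b, (Uᴴ * M * U) a b
      = ∑ x : m × m, (starRingEnd ℂ) (U x.1 a) * M x.1 x.2 * U x.2 b := by
    intro a b
    rw [Matrix.mul_apply]
    simp only [Matrix.mul_apply, Matrix.conjTranspose_apply]
    rw [Fintype.sum_prod_type]
    rw [Finset.sum_comm]
    refine Finset.sum_congr rfl fun k _ => ?_
    rw [Finset.sum_mul]
    simp [RCLike.star_def]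
  have key : ∀ x y : m × m,
      (∑ ab : m × m, ((ff (p' ab.1) (p' ab.2) : ℝ) : ℂ) *
        (((starRingEnd ℂ) (U x.1 ab.1) * M x.1 x.2 * U x.2 ab.2) *
         (starRingEnd ℂ) ((starRingEnd ℂ) (U y.1 ab.1) * M y.1 y.2 * U y.2 ab.2)))
      = ((ff (p x.1) (p x.2) : ℝ) : ℂ) * (M x.1 x.2 * (starRingEnd ℂ) (M y.1 y.2)) *
          ((if y.1 = x.1 then 1 else 0) * (if x.2 = y.2 then 1 else 0)) := by
    intro x y
    rw [Fintype.sum_prod_type]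
    have step1 : ∀ a b : m,
        ((ff (p' a) (p' b) : ℝ) : ℂ) *
          (((starRingEnd ℂ) (U x.1 a) * M x.1 x.2 * U x.2 b) *
           (starRingEnd ℂ) ((starRingEnd ℂ) (U y.1 a) * M y.1 y.2 * U y.2 b))
        = ((ff (p x.1) (p x.2) : ℝ) : ℂ) * (M x.1 x.2 * (starRingEnd ℂ) (M y.1 y.2)) *
            (((starRingEnd ℂ) (U x.1 a) * U y.1 a) * (U x.2 b * (starRingEnd ℂ) (U y.2 b))) := by
      intro a b
      have h := hrepl x.1 x.2 a b
        (M x.1 x.2 * (starRingEnd ℂ) (M y.1 y.2) * U y.1 a * (starRingEnd ℂ) (U y.2 b))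
      calc ((ff (p' a) (p' b) : ℝ) : ℂ) *
          (((starRingEnd ℂ) (U x.1 a) * M x.1 x.2 * U x.2 b) *
           (starRingEnd ℂ) ((starRingEnd ℂ) (U y.1 a) * M y.1 y.2 * U y.2 b))
          = ((ff (p' a) (p' b) : ℝ) : ℂ) * ((starRingEnd ℂ) (U x.1 a) * (U x.2 b *
              (M x.1 x.2 * (starRingEnd ℂ) (M y.1 y.2) * U y.1 a * (starRingEnd ℂ) (U y.2 b)))) := by
            simp only [_root_.map_mul, Complex.conj_conj]; ring
        _ = ((ff (p x.1) (p x.2) : ℝ) : ℂ) * ((starRingEnd ℂ) (U x.1 a) * (U x.2 b *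
              (M x.1 x.2 * (starRingEnd ℂ) (M y.1 y.2) * U y.1 a * (starRingEnd ℂ) (U y.2 b)))) := h
        _ = _ := by ring
    calc ∑ a, ∑ b, ((ff (p' a) (p' b) : ℝ) : ℂ) *
          (((starRingEnd ℂ) (U x.1 a) * M x.1 x.2 * U x.2 b) *
           (starRingEnd ℂ) ((starRingEnd ℂ) (U y.1 a) * M y.1 y.2 * U y.2 b))
        = ∑ a, ∑ b, ((ff (p x.1) (p x.2) : ℝ) : ℂ) * (M x.1 x.2 * (starRingEnd ℂ) (M y.1 y.2)) *
            (((starRingEnd ℂ) (U x.1 a) * U y.1 a) * (U x.2 b * (starRingEnd ℂ) (U y.2 b))) := by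
          exact Finset.sum_congr rfl fun a _ => Finset.sum_congr rfl fun b _ => step1 a b
      _ = ((ff (p x.1) (p x.2) : ℝ) : ℂ) * (M x.1 x.2 * (starRingEnd ℂ) (M y.1 y.2)) *
            ((∑ a, (starRingEnd ℂ) (U x.1 a) * U y.1 a) * (∑ b, U x.2 b * (starRingEnd ℂ) (U y.2 b))) := by
          rw [Finset.sum_mul_sum]
          simp only [Finset.mul_sum]
      _ = _ := by rw [hrow' x.1 y.1, hrow x.2 y.2]
  calc ∑ ab : m × m, (ff (p' ab.1) (p' ab.2) : ℂ) *
        ((Uᴴ * M * U) ab.1 ab.2 * (starRingEnd ℂ) ((Uᴴ * M * U) ab.1 ab.2))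
      = ∑ ab : m × m, ∑ x : m × m, ∑ y : m × m, ((ff (p' ab.1) (p' ab.2) : ℝ) : ℂ) *
          (((starRingEnd ℂ) (U x.1 ab.1) * M x.1 x.2 * U x.2 ab.2) *
           (starRingEnd ℂ) ((starRingEnd ℂ) (U y.1 ab.1) * M y.1 y.2 * U y.2 ab.2)) := by
        refine Finset.sum_congr rfl fun ab _ => ?_
        rw [hN ab.1 ab.2, map_sum, Finset.sum_mul_sum]
        simp only [Finset.mul_sum]
    _ = ∑ x : m × m, ∑ y : m × m, ∑ ab : m × m, ((ff (p' ab.1) (p' ab.2) : ℝ) : ℂ) *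
          (((starRingEnd ℂ) (U x.1 ab.1) * M x.1 x.2 * U x.2 ab.2) *
           (starRingEnd ℂ) ((starRingEnd ℂ) (U y.1 ab.1) * M y.1 y.2 * U y.2 ab.2)) := by
        rw [Finset.sum_comm]
        refine Finset.sum_congr rfl fun x _ => ?_
        rw [Finset.sum_comm]
    _ = ∑ x : m × m, ∑ y : m × m, ((ff (p x.1) (p x.2) : ℝ) : ℂ) *
          (M x.1 x.2 * (starRingEnd ℂ) (M y.1 y.2)) *
          ((if y.1 = x.1 then 1 else 0) * (if x.2 = y.2 then 1 else 0)) :=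
        Finset.sum_congr rfl fun x _ => Finset.sum_congr rfl fun y _ => key x y
    _ = ∑ x : m × m, (ff (p x.1) (p x.2) : ℂ) * (M x.1 x.2 * (starRingEnd ℂ) (M x.1 x.2)) := by
        refine Finset.sum_congr rfl fun x _ => ?_
        rw [Fintype.sum_prod_type]
        simp [Finset.sum_ite_eq, Finset.sum_ite_eq', mul_ite, ite_mul]

lemma qfiOf_eq_QFI {ρ : Matrix m m ℂ} (hρ : ρ.IsHermitian) (H : Matrix m m ℂ)
    (p : m → ℝ) (φ : m → m → ℂ)
    (horth : ∀ j k, star (φ j) ⬝ᵥ φ k = if j = k then 1 else 0)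
    (heig : ∀ j, ρ *ᵥ φ j = ((p j : ℝ) : ℂ) • φ j) :
    qfiOf H p φ = QFI hρ H := by
  classical
  set ψ : m → m → ℂ := fun a i => hρ.eigenvectorBasis a i with hψ
  set p' : m → ℝ := hρ.eigenvalues with hp'
  have horthψ : ∀ a b, star (ψ a) ⬝ᵥ ψ b = if a = b then 1 else 0 := by
    intro a b
    have h := (orthonormal_iff_ite.mp hρ.eigenvectorBasis.orthonormal) a b
    simpa [PiLp.inner_apply, dotProduct, RCLike.inner_apply, Pi.star_apply, RCLike.star_def,
      mul_comm] using h
  have heigψ : ∀ a, ρ *ᵥ ψ a = ((p' a : ℝ) : ℂ) • ψ a := by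
    intro a
    have h := hρ.mulVec_eigenvectorBasis a
    convert h using 2 <;> exact (RCLike.real_smul_eq_coe_smul (K := ℂ) _ _).symm
  set V : Matrix m m ℂ := Matrix.of fun i j => φ j i with hV
  set W : Matrix m m ℂ := Matrix.of fun i a => ψ a i with hW
  have hVc : Vᴴ * V = 1 := by
    ext j k
    rw [show (Vᴴ * V) j k = star (φ j) ⬝ᵥ φ k from colMatrix_mul_entry φ φ j k, horth j k]
    simp [Matrix.one_apply]
  have hWc : Wᴴ * W = 1 := by
    ext j k
    rw [show (Wᴴ * W) j k = star (ψ j) ⬝ᵥ ψ k from colMatrix_mul_entry ψ ψ j k, horthψ j k]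
    simp [Matrix.one_apply]
  have hV2 : V * Vᴴ = 1 := mul_eq_one_comm.mp hVc
  have hW2 : W * Wᴴ = 1 := mul_eq_one_comm.mp hWc
  set U : Matrix m m ℂ := Vᴴ * W with hU
  have hUU : U * Uᴴ = 1 := by
    rw [hU, Matrix.conjTranspose_mul, Matrix.conjTranspose_conjTranspose,
      Matrix.mul_assoc, ← Matrix.mul_assoc W, hW2, Matrix.one_mul, hVc]
  have hWVU : W = V * U := by
    rw [hU, ← Matrix.mul_assoc, hV2, Matrix.one_mul]
  have hUel : ∀ j a, U j a = star (φ j) ⬝ᵥ ψ a := fun j a => colMatrix_mul_entry φ ψ j a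
  have hUp : ∀ j a, p j ≠ p' a → U j a = 0 := by
    intro j a hne
    have h1 : ((p j : ℝ) : ℂ) * (star (φ j) ⬝ᵥ ψ a) = ((p' a : ℝ) : ℂ) * (star (φ j) ⬝ᵥ ψ a) := by
      have w1 : star (φ j) ⬝ᵥ (ρ *ᵥ ψ a) = ((p' a : ℝ) : ℂ) * (star (φ j) ⬝ᵥ ψ a) := by
        rw [heigψ a, dotProduct_smul, smul_eq_mul]
      have w2 : star (φ j) ⬝ᵥ (ρ *ᵥ ψ a) = ((p j : ℝ) : ℂ) * (star (φ j) ⬝ᵥ ψ a) := by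
        rw [Matrix.dotProduct_mulVec]
        have hsv : star (φ j) ᵥ* ρ = ((p j : ℝ) : ℂ) • star (φ j) := by
          have := Matrix.star_mulVec ρᴴ (φ j)
          rw [Matrix.conjTranspose_conjTranspose, hρ.eq] at this
          rw [← this, heig j, star_smul]
          congr 1
          simp [RCLike.star_def, Complex.conj_ofReal]
        rw [hsv, smul_dotProduct, smul_eq_mul]
      rw [← w1, w2]
    rw [hUel j a]
    have h2 : (((p j : ℝ) : ℂ) - ((p' a : ℝ) : ℂ)) * (star (φ j) ⬝ᵥ ψ a) = 0 := by
      linear_combination h1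
    have h3 : ((p j : ℝ) : ℂ) - ((p' a : ℝ) : ℂ) ≠ 0 := sub_ne_zero.mpr (by
      intro h; exact hne (by exact_mod_cast h))
    exact (mul_eq_zero.mp h2).resolve_left h3
  have main := sum_invariance (Vᴴ * H * V) U hUU p p' hUp
  have hNW : Uᴴ * (Vᴴ * H * V) * U = Wᴴ * H * W := by
    rw [hU, Matrix.conjTranspose_mul, Matrix.conjTranspose_conjTranspose]
    calc Wᴴ * V * (Vᴴ * H * V) * (Vᴴ * W)
        = Wᴴ * ((V * Vᴴ) * H * (V * Vᴴ)) * W := by simp only [Matrix.mul_assoc]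
      _ = Wᴴ * H * W := by rw [hV2, Matrix.one_mul, Matrix.mul_one]
  rw [hNW] at main
  have cast1 : ∀ (A : Matrix m m ℂ) (r : m → ℝ),
      ((∑ x : m × m, ff (r x.1) (r x.2) * Complex.normSq (A x.1 x.2) : ℝ) : ℂ)
        = ∑ x : m × m, (ff (r x.1) (r x.2) : ℂ) * (A x.1 x.2 * (starRingEnd ℂ) (A x.1 x.2)) := by
    intro A r
    rw [Complex.ofReal_sum]
    refine Finset.sum_congr rfl fun x _ => ?_
    rw [Complex.mul_conj]
    push_cast
    ring
  have hreal : (∑ x : m × m, ff (p' x.1) (p' x.2) * Complex.normSq ((Wᴴ * H * W) x.1 x.2))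
      = ∑ x : m × m, ff (p x.1) (p x.2) * Complex.normSq ((Vᴴ * H * V) x.1 x.2) := by
    apply Complex.ofReal_injective
    rw [cast1, cast1]
    exact main
  have e1 : ∑ j, ∑ k, ff (p j) (p k) * Complex.normSq (star (φ j) ⬝ᵥ (H *ᵥ φ k))
      = ∑ x : m × m, ff (p x.1) (p x.2) * Complex.normSq ((Vᴴ * H * V) x.1 x.2) := by
    rw [Fintype.sum_prod_type]
    refine Finset.sum_congr rfl fun j _ => Finset.sum_congr rfl fun k _ => ?_
    rw [hV, colMatrix_entry]
  have e2 : ∑ a, ∑ b, ff (p' a) (p' b) * Complex.normSq (star (ψ a) ⬝ᵥ (H *ᵥ ψ b))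
      = ∑ x : m × m, ff (p' x.1) (p' x.2) * Complex.normSq ((Wᴴ * H * W) x.1 x.2) := by
    rw [Fintype.sum_prod_type]
    refine Finset.sum_congr rfl fun a _ => Finset.sum_congr rfl fun b _ => ?_
    rw [hW, colMatrix_entry]
  show qfiOf H p φ = qfiOf H hρ.eigenvalues (fun j i => hρ.eigenvectorBasis j i)
  rw [qfiOf_eq_ff, qfiOf_eq_ff]
  congr 1
  rw [e1, ← hreal, ← e2]

lemma core_sum {d : ℕ} (HS : Matrix (Fin d) (Fin d) ℂ) (hHS : HS.IsHermitian)
    (η : Fin d → ℂ) (u : Fin d → Fin d → ℂ) (i₀ : Fin d)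
    (honb : ∀ i j, star (u i) ⬝ᵥ u j = if i = j then 1 else 0) (hu : u i₀ = η)
    (c : ℝ) (hc : 0 < c) :
    ∑ j, ∑ i, ff (if j = i₀ then c else 0) (if i = i₀ then c else 0) *
        Complex.normSq (star (u j) ⬝ᵥ (HS *ᵥ u i))
      = 2 * c * varVec HS η := by
  classical
  set M : Fin d → Fin d → ℂ := fun j i => star (u j) ⬝ᵥ (HS *ᵥ u i) with hM
  set w : Fin d → ℂ := HS *ᵥ η with hw
  -- symmetry of matrix elements
  have hsym : ∀ i j, (starRingEnd ℂ) (M i j) = M j i := by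
    intro i j
    rw [hM]
    show star (star (u i) ⬝ᵥ (HS *ᵥ u j)) = star (u j) ⬝ᵥ (HS *ᵥ u i)
    rw [Matrix.star_dotProduct, star_star, Matrix.star_mulVec, hHS.eq,
      ← Matrix.dotProduct_mulVec]
  -- completeness of the basis u
  have hcomp : ∀ x x', (∑ i, u i x * (starRingEnd ℂ) (u i x')) = if x = x' then 1 else 0 := by
    intro x x'
    set C : Matrix (Fin d) (Fin d) ℂ := Matrix.of fun x i => u i x with hC
    have hCc : Cᴴ * C = 1 := by
      ext i j
      have := honb i j
      simpa [Matrix.mul_apply, Matrix.conjTranspose_apply, dotProduct, Matrix.one_apply, hC]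
        using this
    have hC2 : C * Cᴴ = 1 := mul_eq_one_comm.mp hCc
    have := congrFun (congrFun hC2 x) x'
    simpa [Matrix.mul_apply, Matrix.conjTranspose_apply, Matrix.one_apply, hC] using this
  -- Parseval
  have hPar : ∑ j, Complex.normSq (M j i₀) = ∑ x, Complex.normSq (w x) := by
    apply Complex.ofReal_injective
    rw [Complex.ofReal_sum, Complex.ofReal_sum]
    have lhs : ∀ j, ((Complex.normSq (M j i₀) : ℝ) : ℂ) = M j i₀ * (starRingEnd ℂ) (M j i₀) :=
      fun j => (Complex.mul_conj _).symm
    have rhs : ∀ x, ((Complex.normSq (w x) : ℝ) : ℂ) = w x * (starRingEnd ℂ) (w x) :=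
      fun x => (Complex.mul_conj _).symm
    simp only [lhs, rhs]
    have hMji : ∀ j, M j i₀ = ∑ x, (starRingEnd ℂ) (u j x) * w x := by
      intro j
      show star (u j) ⬝ᵥ (HS *ᵥ u i₀) = ∑ x, (starRingEnd ℂ) (u j x) * w x
      rw [hu, ← hw]
      simp [dotProduct, RCLike.star_def]
    calc ∑ j, M j i₀ * (starRingEnd ℂ) (M j i₀)
        = ∑ j, ∑ x, ∑ x', ((starRingEnd ℂ) (u j x) * w x) * (u j x' * (starRingEnd ℂ) (w x')) := by
          refine Finset.sum_congr rfl fun j _ => ?_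
          rw [hMji j, map_sum, Finset.sum_mul_sum]
          simp only [_root_.map_mul, Complex.conj_conj]
      _ = ∑ x, ∑ x', (w x * (starRingEnd ℂ) (w x')) * ∑ j, (starRingEnd ℂ) (u j x) * u j x' := by
          rw [Finset.sum_comm]
          refine Finset.sum_congr rfl fun x _ => ?_
          rw [Finset.sum_comm]
          refine Finset.sum_congr rfl fun x' _ => ?_
          rw [Finset.mul_sum]
          exact Finset.sum_congr rfl fun j _ => by ring
      _ = ∑ x, w x * (starRingEnd ℂ) (w x) := by
          refine Finset.sum_congr rfl fun x _ => ?_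
          have : ∀ x x', (∑ j, (starRingEnd ℂ) (u j x) * u j x') = if x' = x then 1 else 0 := by
            intro x x'
            rw [show (∑ j, (starRingEnd ℂ) (u j x) * u j x') = ∑ j, u j x' * (starRingEnd ℂ) (u j x)
              from Finset.sum_congr rfl fun j _ => mul_comm _ _, hcomp x' x]
          simp only [this]
          simp [Finset.sum_ite_eq, Finset.sum_ite_eq', mul_ite, mul_one, mul_zero]
      _ = _ := rfl
  -- M i₀ i₀ is real
  have hz : (M i₀ i₀).im = 0 := Complex.conj_eq_iff_im.mp (hsym i₀ i₀)
  have hzsq : Complex.normSq (M i₀ i₀) = ((M i₀ i₀).re) ^ 2 := by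
    rw [Complex.normSq_apply, hz]; ring
  -- variance identity
  have hstw : star w = star η ᵥ* HS := by rw [hw, Matrix.star_mulVec, hHS.eq]
  have h1 : star η ⬝ᵥ ((HS * HS) *ᵥ η) = star w ⬝ᵥ w := by
    rw [← Matrix.mulVec_mulVec, Matrix.dotProduct_mulVec, ← hstw]
  have h2 : star w ⬝ᵥ w = ((∑ x, Complex.normSq (w x) : ℝ) : ℂ) := by
    simp only [dotProduct, Pi.star_apply, RCLike.star_def]
    rw [Complex.ofReal_sum]
    exact Finset.sum_congr rfl fun x _ => by rw [mul_comm, Complex.mul_conj]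
  have hMz : star η ⬝ᵥ (HS *ᵥ η) = M i₀ i₀ := by
    show _ = star (u i₀) ⬝ᵥ (HS *ᵥ u i₀)
    rw [hu]
  have hvar : varVec HS η = (∑ x, Complex.normSq (w x)) - Complex.normSq (M i₀ i₀) := by
    unfold varVec
    rw [h1, h2, hMz, hzsq, Complex.ofReal_re]
  -- values of ff
  have hval : ∀ j i : Fin d, ff (if j = i₀ then c else 0) (if i = i₀ then c else 0) =
      if j = i₀ then (if i = i₀ then 0 else c) else (if i = i₀ then c else 0) := by
    intro j i
    by_cases h1 : j = i₀ <;> by_cases h2 : i = i₀ <;>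
      simp [h1, h2, ff_self, ff_pos_zero hc, ff_zero_pos hc]
  have split : (∑ j, ∑ i, ff (if j = i₀ then c else 0) (if i = i₀ then c else 0) *
        Complex.normSq (M j i))
      = c * (∑ i ∈ Finset.univ.erase i₀, Complex.normSq (M i₀ i))
        + c * (∑ j ∈ Finset.univ.erase i₀, Complex.normSq (M j i₀)) := by
    simp only [hval]
    rw [← Finset.add_sum_erase _ _ (Finset.mem_univ i₀)]
    congr 1
    · -- row i₀
      rw [← Finset.add_sum_erase _ _ (Finset.mem_univ i₀), Finset.mul_sum]
      have h0 : (if i₀ = i₀ then (if i₀ = i₀ then (0:ℝ) else c) else if i₀ = i₀ then c else 0)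
          = 0 := by simp
      rw [h0, zero_mul, zero_add]
      refine Finset.sum_congr rfl fun i hi => ?_
      have hi' := (Finset.mem_erase.mp hi).1
      simp [hi']
    · -- other rows
      rw [Finset.mul_sum]
      refine Finset.sum_congr rfl fun j hj => ?_
      have hj' := (Finset.mem_erase.mp hj).1
      simp only [hj', if_false, ite_mul, zero_mul]
      rw [Finset.sum_ite_eq' Finset.univ i₀ fun x => c * Complex.normSq (M j x)]
      simp [mul_comm]
  have hAB : (∑ i ∈ Finset.univ.erase i₀, Complex.normSq (M i₀ i))
      = ∑ j ∈ Finset.univ.erase i₀, Complex.normSq (M j i₀) := by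
    refine Finset.sum_congr rfl fun i _ => ?_
    rw [← hsym i₀ i, Complex.normSq_conj]
  have hB : (∑ j ∈ Finset.univ.erase i₀, Complex.normSq (M j i₀))
      = (∑ j, Complex.normSq (M j i₀)) - Complex.normSq (M i₀ i₀) := by
    rw [← Finset.add_sum_erase _ _ (Finset.mem_univ i₀)]
    ring
  rw [split, hAB, hB, hPar, hvar]
  ring

lemma dot_eta {d : ℕ} {η : Fin d → ℂ} {u : Fin d → Fin d → ℂ} {i₀ : Fin d}
    (honb : ∀ i j, star (u i) ⬝ᵥ u j = if i = j then 1 else 0) (hu : u i₀ = η) (i : Fin d) :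
    star η ⬝ᵥ u i = if i = i₀ then 1 else 0 := by
  have e : (starRingEnd ℂ) (star (u i) ⬝ᵥ η) = star η ⬝ᵥ u i := by
    show star (star (u i) ⬝ᵥ η) = _
    rw [Matrix.star_dotProduct, star_star]
  rw [← e, ← hu, honb i i₀]
  by_cases hcase : i = i₀ <;> simp [hcase]


lemma QFI_pure {d : ℕ} (η : Fin d → ℂ) (hη : star η ⬝ᵥ η = 1)
    (HS : Matrix (Fin d) (Fin d) ℂ) (hHS : HS.IsHermitian)
    (h : (Matrix.vecMulVec η (star η)).IsHermitian) :
    QFI h HS = 4 * varVec HS η := by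
  obtain ⟨i₀, u, honb, hu⟩ := exists_onb η hη
  have heig : ∀ i, Matrix.vecMulVec η (star η) *ᵥ u i
      = ((((if i = i₀ then (1:ℝ) else 0) : ℝ) : ℂ)) • u i := by
    intro i
    have hv : Matrix.vecMulVec η (star η) *ᵥ u i = (star η ⬝ᵥ u i) • η := by
      funext a
      simp only [Matrix.mulVec, dotProduct, Matrix.vecMulVec_apply, Pi.smul_apply, smul_eq_mul]
      rw [Finset.sum_mul]
      exact Finset.sum_congr rfl fun c _ => by simp [mul_comm, mul_assoc, mul_left_comm]
    rw [hv, dot_eta honb hu i]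
    by_cases hcase : i = i₀ <;> simp [hcase, hu]
  have key := qfiOf_eq_QFI h HS (fun i => if i = i₀ then 1 else 0) u honb heig
  rw [← key, qfiOf_eq_ff, core_sum HS hHS η u i₀ honb hu 1 one_pos]
  ring


lemma sum_mulVec' {n : Type*} [Fintype n] {K : ℕ} (f : Fin K → Matrix n n ℂ) (v : n → ℂ) :
    (∑ k, f k) *ᵥ v = ∑ k, f k *ᵥ v := by
  funext a
  rw [Finset.sum_apply]
  simp only [Matrix.mulVec, dotProduct, Matrix.sum_apply, Finset.sum_mul]
  rw [Finset.sum_comm]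


lemma horth_block (u : Fin K → Fin d → Fin d → ℂ)
    (honb : ∀ k i j, star (u k i) ⬝ᵥ u k j = if i = j then 1 else 0) :
    ∀ x y : Fin d × Fin K,
      star (fun ab : Fin d × Fin K => u x.2 x.1 ab.1 * (if ab.2 = x.2 then 1 else 0)) ⬝ᵥ
        (fun ab : Fin d × Fin K => u y.2 y.1 ab.1 * (if ab.2 = y.2 then 1 else 0))
      = if x = y then 1 else 0 := by
  rintro ⟨x1, x2⟩ ⟨y1, y2⟩
  show (∑ ab : Fin d × Fin K, _) = _
  rw [Fintype.sum_prod_type]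
  by_cases h2 : x2 = y2
  · subst h2
    have hb : ∀ (a : Fin d) (b : Fin K),
        star (u x2 x1 a * if b = x2 then (1:ℂ) else 0) * (u x2 y1 a * (if b = x2 then 1 else 0))
        = if b = x2 then star (u x2 x1 a) * u x2 y1 a else 0 := by
      intro a b; by_cases hb : b = x2 <;> simp [hb]
    have hcollapse : ∀ a : Fin d, (∑ b : Fin K,
        star (u x2 x1 a * if b = x2 then (1:ℂ) else 0) * (u x2 y1 a * (if b = x2 then 1 else 0)))
        = star (u x2 x1 a) * u x2 y1 a := by
      intro a
      simp only [hb]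
      simp [Finset.sum_ite_eq']
    calc (∑ a : Fin d, ∑ b : Fin K,
        star (u x2 x1 a * if b = x2 then (1:ℂ) else 0) * (u x2 y1 a * (if b = x2 then 1 else 0)))
        = ∑ a : Fin d, star (u x2 x1 a) * u x2 y1 a :=
          Finset.sum_congr rfl fun a _ => hcollapse a
      _ = star (u x2 x1) ⬝ᵥ u x2 y1 := rfl
      _ = if x1 = y1 then 1 else 0 := honb x2 x1 y1
      _ = if (x1, x2) = (y1, x2) then 1 else 0 := by simp [Prod.ext_iff]
  · rw [if_neg (by simp [h2])]
    refine Finset.sum_eq_zero fun a _ => Finset.sum_eq_zero fun b _ => ?_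
    by_cases hb : b = x2
    · have h0 : (if b = y2 then (1:ℂ) else 0) = 0 := if_neg (by rw [hb]; exact h2)
      simp [h0]
    · simp [hb]

lemma kron_term_mulVec (η : Fin K → Fin d → ℂ) (u : Fin K → Fin d → Fin d → ℂ)
    (i₀ : Fin K → Fin d)
    (honb : ∀ k i j, star (u k i) ⬝ᵥ u k j = if i = j then 1 else 0)
    (hu : ∀ k, u k (i₀ k) = η k) (l : Fin K) (x : Fin d × Fin K) :
    (Matrix.vecMulVec (η l) (star (η l)) ⊗ₖ Matrix.single l l (1:ℂ)) *ᵥ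
        (fun ab : Fin d × Fin K => u x.2 x.1 ab.1 * (if ab.2 = x.2 then 1 else 0))
      = (if l = x.2 then (if x.1 = i₀ x.2 then (1:ℂ) else 0) else 0) •
        (fun ab : Fin d × Fin K => u x.2 x.1 ab.1 * (if ab.2 = x.2 then 1 else 0)) := by
  funext ab
  obtain ⟨a, b⟩ := ab
  show (∑ ce : Fin d × Fin K, _) = _
  have hterm : ∀ ce : Fin d × Fin K,
      (Matrix.vecMulVec (η l) (star (η l)) ⊗ₖ Matrix.single l l (1:ℂ)) (a,b) ce *
        (u x.2 x.1 ce.1 * (if ce.2 = x.2 then 1 else 0))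
      = if ce.2 = l then ((if b = l then 1 else 0) * (if l = x.2 then 1 else 0) *
          (η l a * ((starRingEnd ℂ) (η l ce.1) * u x.2 x.1 ce.1))) else 0 := by
    rintro ⟨c, e⟩
    simp only [Matrix.kroneckerMap_apply, Matrix.vecMulVec_apply, Matrix.single,
      Matrix.of_apply]
    by_cases he : e = l <;> by_cases hbl : b = l <;> by_cases hlx : l = x.2 <;>
      by_cases hex : e = x.2 <;>
      simp_all [eq_comm, Pi.star_apply, RCLike.star_def] <;> ring
  calc (∑ ce : Fin d × Fin K,
      (Matrix.vecMulVec (η l) (star (η l)) ⊗ₖ Matrix.single l l (1:ℂ)) (a,b) ce *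
        (u x.2 x.1 ce.1 * (if ce.2 = x.2 then 1 else 0)))
      = ∑ ce : Fin d × Fin K, if ce.2 = l then ((if b = l then 1 else 0) *
          (if l = x.2 then 1 else 0) *
          (η l a * ((starRingEnd ℂ) (η l ce.1) * u x.2 x.1 ce.1))) else 0 :=
        Finset.sum_congr rfl fun ce _ => hterm ce
    _ = ∑ c : Fin d, (if b = l then 1 else 0) * (if l = x.2 then 1 else 0) *
          (η l a * ((starRingEnd ℂ) (η l c) * u x.2 x.1 c)) := by
        rw [Fintype.sum_prod_type]
        refine Finset.sum_congr rfl fun c _ => ?_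
        simp [Finset.sum_ite_eq']
    _ = (if b = l then 1 else 0) * (if l = x.2 then 1 else 0) *
          (η l a * (star (η l) ⬝ᵥ u x.2 x.1)) := by
        rw [← Finset.mul_sum, ← Finset.mul_sum]
        rfl
    _ = _ := by
      by_cases hlx : l = x.2
      · subst hlx
        rw [dot_eta (honb x.2) (hu x.2) x.1]
        by_cases hx : x.1 = i₀ x.2
        · by_cases hbl : b = x.2 <;> simp [hx, hbl, hu x.2]
        · by_cases hbl : b = x.2 <;> simp [hx, hbl]
      · have h0 : (if l = x.2 then (if x.1 = i₀ x.2 then (1:ℂ) else 0) else 0) = 0 :=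
          if_neg hlx
        simp [hlx, h0]

lemma kron_HS_dot (HS : Matrix (Fin d) (Fin d) ℂ) (u : Fin K → Fin d → Fin d → ℂ)
    (x y : Fin d × Fin K) :
    star (fun ab : Fin d × Fin K => u x.2 x.1 ab.1 * (if ab.2 = x.2 then 1 else 0)) ⬝ᵥ
      ((HS ⊗ₖ (1 : Matrix (Fin K) (Fin K) ℂ)) *ᵥ
        (fun ab : Fin d × Fin K => u y.2 y.1 ab.1 * (if ab.2 = y.2 then 1 else 0)))
    = if x.2 = y.2 then star (u y.2 x.1) ⬝ᵥ (HS *ᵥ u y.2 y.1) else 0 := by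
  have hv1 : (HS ⊗ₖ (1 : Matrix (Fin K) (Fin K) ℂ)) *ᵥ
      (fun ab : Fin d × Fin K => u y.2 y.1 ab.1 * (if ab.2 = y.2 then 1 else 0))
      = fun ab : Fin d × Fin K => (HS *ᵥ u y.2 y.1) ab.1 * (if ab.2 = y.2 then 1 else 0) := by
    funext ab
    obtain ⟨a, b⟩ := ab
    show (∑ ce : Fin d × Fin K, _) = _
    have hterm : ∀ ce : Fin d × Fin K,
        (HS ⊗ₖ (1 : Matrix (Fin K) (Fin K) ℂ)) (a, b) ce *
          (u y.2 y.1 ce.1 * (if ce.2 = y.2 then 1 else 0))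
        = if ce.2 = b then HS a ce.1 * u y.2 y.1 ce.1 * (if b = y.2 then 1 else 0) else 0 := by
      rintro ⟨c, e⟩
      simp only [Matrix.kroneckerMap_apply, Matrix.one_apply]
      by_cases he : e = b <;> by_cases hey : e = y.2 <;> by_cases hby : b = y.2 <;>
        simp_all [eq_comm] <;> ring
    calc (∑ ce : Fin d × Fin K, (HS ⊗ₖ (1 : Matrix (Fin K) (Fin K) ℂ)) (a, b) ce *
          (u y.2 y.1 ce.1 * (if ce.2 = y.2 then 1 else 0)))
        = ∑ ce : Fin d × Fin K,
            if ce.2 = b then HS a ce.1 * u y.2 y.1 ce.1 * (if b = y.2 then 1 else 0) else 0 :=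
          Finset.sum_congr rfl fun ce _ => hterm ce
      _ = ∑ c : Fin d, HS a c * u y.2 y.1 c * (if b = y.2 then 1 else 0) := by
          rw [Fintype.sum_prod_type]
          refine Finset.sum_congr rfl fun c _ => ?_
          simp [Finset.sum_ite_eq']
      _ = (HS *ᵥ u y.2 y.1) a * (if b = y.2 then 1 else 0) := by
          rw [← Finset.sum_mul]
          rfl
  rw [hv1]
  show (∑ ab : Fin d × Fin K, _) = _
  rw [Fintype.sum_prod_type]
  by_cases hxy : x.2 = y.2
  · rw [if_pos hxy]
    have hrow : ∀ a : Fin d, (∑ b : Fin K,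
        star (u x.2 x.1 a * (if b = x.2 then (1:ℂ) else 0)) *
          ((HS *ᵥ u y.2 y.1) a * (if b = y.2 then 1 else 0)))
        = star (u x.2 x.1 a) * (HS *ᵥ u y.2 y.1) a := by
      intro a
      have : ∀ b : Fin K, star (u x.2 x.1 a * (if b = x.2 then (1:ℂ) else 0)) *
          ((HS *ᵥ u y.2 y.1) a * (if b = y.2 then 1 else 0))
          = if b = x.2 then star (u x.2 x.1 a) * (HS *ᵥ u y.2 y.1) a else 0 := by
        intro b
        by_cases hb : b = x.2 <;> simp_all [eq_comm, hxy] <;> ring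
      simp only [this]
      simp [Finset.sum_ite_eq']
    calc (∑ a : Fin d, ∑ b : Fin K,
        star (u x.2 x.1 a * (if b = x.2 then (1:ℂ) else 0)) *
          ((HS *ᵥ u y.2 y.1) a * (if b = y.2 then 1 else 0)))
        = ∑ a : Fin d, star (u x.2 x.1 a) * (HS *ᵥ u y.2 y.1) a :=
          Finset.sum_congr rfl fun a _ => hrow a
      _ = star (u y.2 x.1) ⬝ᵥ (HS *ᵥ u y.2 y.1) := by rw [hxy]; rfl
  · rw [if_neg hxy]
    refine Finset.sum_eq_zero fun a _ => Finset.sum_eq_zero fun b _ => ?_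
    by_cases hb : b = x.2
    · have h0 : (if b = y.2 then (1:ℂ) else 0) = 0 := if_neg (by rw [hb]; exact hxy)
      simp [h0]
    · simp [hb]

lemma kron_diag_mulVec (ε : Fin K → ℝ) (u : Fin K → Fin d → Fin d → ℂ) (y : Fin d × Fin K) :
    ((1 : Matrix (Fin d) (Fin d) ℂ) ⊗ₖ Matrix.diagonal (fun k => ((ε k : ℝ) : ℂ))) *ᵥ
      (fun ab : Fin d × Fin K => u y.2 y.1 ab.1 * (if ab.2 = y.2 then 1 else 0))
    = ((ε y.2 : ℝ) : ℂ) • (fun ab : Fin d × Fin K => u y.2 y.1 ab.1 * (if ab.2 = y.2 then 1 else 0)) := by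
  funext ab
  obtain ⟨a, b⟩ := ab
  show (∑ ce : Fin d × Fin K, _) = _
  have hterm : ∀ ce : Fin d × Fin K,
      ((1 : Matrix (Fin d) (Fin d) ℂ) ⊗ₖ Matrix.diagonal (fun k => ((ε k : ℝ) : ℂ))) (a, b) ce *
        (u y.2 y.1 ce.1 * (if ce.2 = y.2 then 1 else 0))
      = if ce = (a, b) then ((ε b : ℝ) : ℂ) * u y.2 y.1 a * (if b = y.2 then 1 else 0) else 0 := by
    rintro ⟨c, e⟩
    simp only [Matrix.kroneckerMap_apply, Matrix.one_apply, Matrix.diagonal_apply, Prod.mk.injEq,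
      Prod.ext_iff]
    by_cases hc : c = a <;> by_cases he : e = b <;> by_cases hey : e = y.2 <;>
      simp_all [eq_comm] <;> ring
  calc (∑ ce : Fin d × Fin K, _) = ∑ ce : Fin d × Fin K,
        if ce = (a, b) then ((ε b : ℝ) : ℂ) * u y.2 y.1 a * (if b = y.2 then 1 else 0) else 0 :=
      Finset.sum_congr rfl fun ce _ => hterm ce
    _ = ((ε b : ℝ) : ℂ) * u y.2 y.1 a * (if b = y.2 then 1 else 0) := by
        simp [Finset.sum_ite_eq']
    _ = _ := by
        by_cases hb : b = y.2 <;> simp [hb, Pi.smul_apply, smul_eq_mul] <;> ring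

end AuxLemmas

theorem ensemble_qfi_identity
    {d K : ℕ} (hK : 0 < K)
    (q : Fin K → ℝ) (hq : ∀ k, 0 < q k) (hqsum : ∑ k, q k = 1)
    (η : Fin K → Fin d → ℂ) (hη : ∀ k, star (η k) ⬝ᵥ η k = 1)
    (HS : Matrix (Fin d) (Fin d) ℂ) (hHS : HS.IsHermitian)
    (ε : Fin K → ℝ)
    (σ : Matrix (Fin d × Fin K) (Fin d × Fin K) ℂ)
    (hσdef : σ = ∑ k, ((q k : ℝ) : ℂ) •
      (Matrix.vecMulVec (η k) (star (η k)) ⊗ₖ Matrix.single k k (1 : ℂ)))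
    (hσ : σ.IsHermitian)
    (hηherm : ∀ k, (Matrix.vecMulVec (η k) (star (η k))).IsHermitian) :
    QFI hσ (HS ⊗ₖ (1 : Matrix (Fin K) (Fin K) ℂ) +
        (1 : Matrix (Fin d) (Fin d) ℂ) ⊗ₖ Matrix.diagonal (fun k => ((ε k : ℝ) : ℂ))) =
      ∑ k, q k * QFI (hηherm k) HS ∧
    ∑ k, q k * QFI (hηherm k) HS = 4 * ∑ k, q k * varVec HS (η k) := by
  classical
  choose i₀ u honb hu using fun k => exists_onb (η k) (hη k)
  have hpure : ∀ k, QFI (hηherm k) HS = 4 * varVec HS (η k) := fun k =>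
    QFI_pure (η k) (hη k) HS hHS (hηherm k)
  have hsecond : ∑ k, q k * QFI (hηherm k) HS = 4 * ∑ k, q k * varVec HS (η k) := by
    rw [Finset.mul_sum]
    exact Finset.sum_congr rfl fun k _ => by rw [hpure k]; ring
  refine ⟨?_, hsecond⟩
  rw [hsecond]
  have horthφ := horth_block u honb
  have heig : ∀ x : Fin d × Fin K,
      σ *ᵥ (fun ab : Fin d × Fin K => u x.2 x.1 ab.1 * (if ab.2 = x.2 then 1 else 0))
      = (((if x.1 = i₀ x.2 then q x.2 else 0 : ℝ)) : ℂ) •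
        (fun ab : Fin d × Fin K => u x.2 x.1 ab.1 * (if ab.2 = x.2 then 1 else 0)) := by
    intro x
    rw [hσdef, sum_mulVec']
    have hterm : ∀ l, (((q l : ℝ) : ℂ) •
          (Matrix.vecMulVec (η l) (star (η l)) ⊗ₖ Matrix.single l l (1:ℂ))) *ᵥ
          (fun ab : Fin d × Fin K => u x.2 x.1 ab.1 * (if ab.2 = x.2 then 1 else 0))
        = (if l = x.2 then ((q l : ℝ) : ℂ) * (if x.1 = i₀ x.2 then 1 else 0) else 0) •
          (fun ab : Fin d × Fin K => u x.2 x.1 ab.1 * (if ab.2 = x.2 then 1 else 0)) := by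
      intro l
      rw [Matrix.smul_mulVec, kron_term_mulVec η u i₀ honb hu l x, smul_smul]
      congr 1
      by_cases h1 : l = x.2 <;> simp [h1]
    calc (∑ l, (((q l : ℝ) : ℂ) •
          (Matrix.vecMulVec (η l) (star (η l)) ⊗ₖ Matrix.single l l (1:ℂ))) *ᵥ
          (fun ab : Fin d × Fin K => u x.2 x.1 ab.1 * (if ab.2 = x.2 then 1 else 0)))
        = ∑ l, (if l = x.2 then ((q l : ℝ) : ℂ) * (if x.1 = i₀ x.2 then 1 else 0) else 0) •
            (fun ab : Fin d × Fin K => u x.2 x.1 ab.1 * (if ab.2 = x.2 then 1 else 0)) :=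
          Finset.sum_congr rfl fun l _ => hterm l
      _ = _ := by
          rw [← Finset.sum_smul]
          congr 1
          rw [Finset.sum_ite_eq' Finset.univ x.2
            (fun l => ((q l : ℝ) : ℂ) * (if x.1 = i₀ x.2 then 1 else 0))]
          by_cases h : x.1 = i₀ x.2 <;> simp [h]
  have key := qfiOf_eq_QFI hσ
      (HS ⊗ₖ (1 : Matrix (Fin K) (Fin K) ℂ) +
        (1 : Matrix (Fin d) (Fin d) ℂ) ⊗ₖ Matrix.diagonal (fun k => ((ε k : ℝ) : ℂ)))
      (fun x => if x.1 = i₀ x.2 then q x.2 else 0)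
      (fun x ab => u x.2 x.1 ab.1 * (if ab.2 = x.2 then 1 else 0)) horthφ heig
  rw [← key, qfiOf_eq_ff]
  have hMel : ∀ x y : Fin d × Fin K,
      star (fun ab : Fin d × Fin K => u x.2 x.1 ab.1 * (if ab.2 = x.2 then 1 else 0)) ⬝ᵥ
        ((HS ⊗ₖ (1 : Matrix (Fin K) (Fin K) ℂ) +
          (1 : Matrix (Fin d) (Fin d) ℂ) ⊗ₖ Matrix.diagonal (fun k => ((ε k : ℝ) : ℂ))) *ᵥ
          (fun ab : Fin d × Fin K => u y.2 y.1 ab.1 * (if ab.2 = y.2 then 1 else 0)))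
      = (if x.2 = y.2 then star (u y.2 x.1) ⬝ᵥ (HS *ᵥ u y.2 y.1) else 0)
        + (if x = y then ((ε y.2 : ℝ) : ℂ) else 0) := by
    intro x y
    rw [Matrix.add_mulVec, dotProduct_add]
    congr 1
    · exact kron_HS_dot HS u x y
    · rw [kron_diag_mulVec ε u y, dotProduct_smul, horthφ x y, smul_eq_mul]
      by_cases h : x = y <;> simp [h]
  have hFF : ∀ x y : Fin d × Fin K,
      ff (if x.1 = i₀ x.2 then q x.2 else 0) (if y.1 = i₀ y.2 then q y.2 else 0) *
        Complex.normSq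
          (star (fun ab : Fin d × Fin K => u x.2 x.1 ab.1 * (if ab.2 = x.2 then 1 else 0)) ⬝ᵥ
            ((HS ⊗ₖ (1 : Matrix (Fin K) (Fin K) ℂ) +
              (1 : Matrix (Fin d) (Fin d) ℂ) ⊗ₖ Matrix.diagonal (fun k => ((ε k : ℝ) : ℂ))) *ᵥ
              (fun ab : Fin d × Fin K => u y.2 y.1 ab.1 * (if ab.2 = y.2 then 1 else 0))))
      = if x.2 = y.2 then
          ff (if x.1 = i₀ x.2 then q x.2 else 0) (if y.1 = i₀ y.2 then q y.2 else 0) *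
            Complex.normSq (star (u y.2 x.1) ⬝ᵥ (HS *ᵥ u y.2 y.1))
        else 0 := by
    intro x y
    rw [hMel x y]
    by_cases h2 : x.2 = y.2
    · rw [if_pos h2]
      by_cases hxy : x = y
      · subst hxy
        rw [if_pos rfl, if_pos rfl]
        rw [ff_self, zero_mul, zero_mul]
      · rw [if_neg hxy, add_zero, if_pos h2]
    · have hne : x ≠ y := fun hc => h2 (by rw [hc])
      rw [if_neg h2, if_neg hne, if_neg h2, add_zero]
      simp
  calc 2 * ∑ x : Fin d × Fin K, ∑ y : Fin d × Fin K,
        ff (if x.1 = i₀ x.2 then q x.2 else 0) (if y.1 = i₀ y.2 then q y.2 else 0) *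
          Complex.normSq
            (star (fun ab : Fin d × Fin K => u x.2 x.1 ab.1 * (if ab.2 = x.2 then 1 else 0)) ⬝ᵥ
              ((HS ⊗ₖ (1 : Matrix (Fin K) (Fin K) ℂ) +
                (1 : Matrix (Fin d) (Fin d) ℂ) ⊗ₖ Matrix.diagonal (fun k => ((ε k : ℝ) : ℂ))) *ᵥ
                (fun ab : Fin d × Fin K => u y.2 y.1 ab.1 * (if ab.2 = y.2 then 1 else 0))))
      = 2 * ∑ x : Fin d × Fin K, ∑ y : Fin d × Fin K,
          (if x.2 = y.2 then
            ff (if x.1 = i₀ x.2 then q x.2 else 0) (if y.1 = i₀ y.2 then q y.2 else 0) *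
              Complex.normSq (star (u y.2 x.1) ⬝ᵥ (HS *ᵥ u y.2 y.1))
          else 0) := by
        congr 1
        exact Finset.sum_congr rfl fun x _ => Finset.sum_congr rfl fun y _ => hFF x y
    _ = 2 * ∑ x : Fin d × Fin K, ∑ y1 : Fin d,
          ff (if x.1 = i₀ x.2 then q x.2 else 0) (if y1 = i₀ x.2 then q x.2 else 0) *
            Complex.normSq (star (u x.2 x.1) ⬝ᵥ (HS *ᵥ u x.2 y1)) := by
        congr 1
        refine Finset.sum_congr rfl fun x _ => ?_
        rw [Fintype.sum_prod_type]
        refine Finset.sum_congr rfl fun y1 _ => ?_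
        simp [Finset.sum_ite_eq]
    _ = 2 * ∑ k : Fin K, ∑ x1 : Fin d, ∑ y1 : Fin d,
          ff (if x1 = i₀ k then q k else 0) (if y1 = i₀ k then q k else 0) *
            Complex.normSq (star (u k x1) ⬝ᵥ (HS *ᵥ u k y1)) := by
        congr 1
        rw [Fintype.sum_prod_type]
        rw [Finset.sum_comm]
    _ = 2 * ∑ k : Fin K, 2 * q k * varVec HS (η k) := by
        congr 1
        exact Finset.sum_congr rfl fun k _ =>
          core_sum HS hHS (η k) (u k) (i₀ k) (honb k) (hu k) (q k) (hq k)
    _ = 4 * ∑ k, q k * varVec HS (η k) := by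
        rw [Finset.mul_sum, Finset.mul_sum]
        refine Finset.sum_congr rfl fun k _ => by ring


end
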